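/- arXiv:2301.06274 — 2 statements merged into one kernel-verified Lean document; each statement's English description precedes it below -/
import Mathlib

section
/- Let A be a left brace such that A³ = ⟨0⟩, and let a ∈ A. Then for every integer n one has aⁿ + a⁻ⁿ = n²·(a ⋆ a), where aⁿ denotes the n-th multiplicative power of a. -/
/-- A left brace: `(A, +)` is an abelian group, `(A, *)` is a group, and
`a * (b + c) = a * b + a * c - a` for all `a b c`. -/
class LeftBrace (A : Type*) extends AddCommGroup A, Group A where
  mul_add_eq : ∀ a b c : A, a * (b + c) = a * b + a * c - a

namespace LeftBrace

variable {A : Type*} [LeftBrace A]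

/-- The star operation of a left brace: `a ⋆ b = a * b - a - b`. -/
def star (a b : A) : A := a * b - a - b

/-- `K ⋆ L`: the subgroup of the additive group of `A` generated by all
`x ⋆ y` with `x ∈ K`, `y ∈ L`. -/
def setStar (K L : Set A) : AddSubgroup A :=
  AddSubgroup.closure (Set.image2 star K L)

/-- A subbrace of `A`: a subset that is simultaneously a subgroup of the
additive group of `A` and a subgroup of the multiplicative group of `A`. -/
def IsSubbrace (S : Set A) : Prop :=
  (0 : A) ∈ S ∧ (∀ x ∈ S, ∀ y ∈ S, x + y ∈ S) ∧ (∀ x ∈ S, -x ∈ S) ∧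
    (1 : A) ∈ S ∧ (∀ x ∈ S, ∀ y ∈ S, x * y ∈ S) ∧ (∀ x ∈ S, x⁻¹ ∈ S)

/-- A left ideal of `A`: a subbrace `S` with `a ⋆ b ∈ S` for all `a ∈ A`, `b ∈ S`. -/
def IsLeftIdeal (S : Set A) : Prop :=
  IsSubbrace S ∧ ∀ a : A, ∀ b ∈ S, star a b ∈ S

/-- An ideal of `A`: a subbrace `S` with `a ⋆ z ∈ S` and `z ⋆ a ∈ S`
for all `a ∈ A`, `z ∈ S`. -/
def IsIdeal (S : Set A) : Prop :=
  IsSubbrace S ∧ ∀ a : A, ∀ z ∈ S, star a z ∈ S ∧ star z a ∈ S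

/-- The left series of the brace `A`, with the indexing shifted by one:
`leftSeriesN A 0 = A¹ = A` and `leftSeriesN A n = Aⁿ⁺¹ = A ⋆ Aⁿ`.
In particular `leftSeriesN A 1 = A²` and `leftSeriesN A 2 = A³`. -/
def leftSeriesN (A : Type*) [LeftBrace A] : ℕ → AddSubgroup A
  | 0 => ⊤
  | n + 1 => setStar Set.univ ((leftSeriesN A n : AddSubgroup A) : Set A)

/-- The right series of the brace `A`, with the indexing shifted by one:
`rightSeriesN A 0 = A⁽¹⁾ = A` and `rightSeriesN A n = A⁽ⁿ⁺¹⁾ = A⁽ⁿ⁾ ⋆ A`.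
In particular `rightSeriesN A 2 = A⁽³⁾` and `rightSeriesN A 3 = A⁽⁴⁾`. -/
def rightSeriesN (A : Type*) [LeftBrace A] : ℕ → AddSubgroup A
  | 0 => ⊤
  | n + 1 => setStar ((rightSeriesN A n : AddSubgroup A) : Set A) Set.univ

end LeftBrace

open LeftBrace

section Aux

variable {A : Type*} [LeftBrace A]

private lemma lb_mul_zero (a : A) : a * 0 = a := by
  have h := LeftBrace.mul_add_eq a 0 0
  rw [add_zero, eq_sub_iff_add_eq] at h
  exact (add_left_cancel h).symm

private lemma lb_zero_eq_one : (0 : A) = 1 := by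
  have := lb_mul_zero (1 : A)
  rwa [one_mul] at this

private lemma lb_star_add (a b c : A) : LeftBrace.star a (b + c) =
    LeftBrace.star a b + LeftBrace.star a c := by
  simp only [LeftBrace.star, LeftBrace.mul_add_eq]; abel

private lemma lb_star_zero (a : A) : LeftBrace.star a 0 = 0 := by
  simp [LeftBrace.star, lb_mul_zero]

private lemma lb_zpow_succ (a : A) (n : ℤ) :
    a ^ (n + 1) = LeftBrace.star a (a ^ n) + a + a ^ n := by
  have : a ^ (n + 1) = a * a ^ n := by rw [← zpow_one_add, add_comm]
  rw [this, LeftBrace.star]; abel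

private lemma lb_star_mem_A2 (b c : A) : LeftBrace.star b c ∈ leftSeriesN A 1 := by
  show LeftBrace.star b c ∈ setStar Set.univ _
  apply AddSubgroup.subset_closure
  exact Set.mem_image2_of_mem (Set.mem_univ b) (by simp [leftSeriesN])

private lemma lb_star_star (h3 : leftSeriesN A 2 = ⊥) (a b c : A) :
    LeftBrace.star a (LeftBrace.star b c) = 0 := by
  have hm : LeftBrace.star a (LeftBrace.star b c) ∈ leftSeriesN A 2 := by
    show _ ∈ setStar Set.univ _
    apply AddSubgroup.subset_closure
    exact Set.mem_image2_of_mem (Set.mem_univ a) (lb_star_mem_A2 b c)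
  rw [h3] at hm
  simpa using hm

private lemma lb_star_zpow (h3 : leftSeriesN A 2 = ⊥) (a : A) (n : ℤ) :
    LeftBrace.star a (a ^ n) = n • LeftBrace.star a a := by
  induction n using Int.induction_on with
  | zero => rw [zpow_zero, ← lb_zero_eq_one, lb_star_zero, zero_zsmul]
  | succ k ih =>
      rw [lb_zpow_succ, lb_star_add, lb_star_add, lb_star_star h3, ih,
        add_zsmul, one_zsmul]
      abel
  | pred k ih =>
      have h := lb_zpow_succ a (-(k : ℤ) - 1)
      rw [sub_add_cancel] at h
      have h2 : LeftBrace.star a (a ^ (-(k : ℤ))) =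
          LeftBrace.star a (LeftBrace.star a (a ^ (-(k : ℤ) - 1))) + LeftBrace.star a a
            + LeftBrace.star a (a ^ (-(k : ℤ) - 1)) := by
        rw [← lb_star_add, ← lb_star_add, ← h]
      rw [lb_star_star h3, zero_add, ih] at h2
      have h4 : LeftBrace.star a (a ^ (-(k : ℤ) - 1)) =
          (-(k : ℤ)) • LeftBrace.star a a - LeftBrace.star a a := by
        rw [h2]; abel
      rw [h4, sub_zsmul, one_zsmul]
      abel

end Aux

/-- If `A` is a left brace with `A³ = ⟨0⟩` (here
`A³ = A ⋆ (A ⋆ A) = leftSeriesN A 2`) and `a ∈ A`, then for every integer `n`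
one has `aⁿ + a⁻ⁿ = n²·(a ⋆ a)`. -/
theorem zpow_add_zpow_neg {A : Type*} [LeftBrace A]
    (h3 : leftSeriesN A 2 = ⊥) (a : A) (n : ℤ) :
    a ^ n + a ^ (-n) = (n ^ 2) • star a a := by
  induction n using Int.induction_on with
  | zero =>
      rw [neg_zero, zpow_zero, ← lb_zero_eq_one, add_zero]
      norm_num
  | succ k ih =>
      have h1 : a ^ ((k : ℤ) + 1) = (k : ℤ) • LeftBrace.star a a + a + a ^ (k : ℤ) := by
        rw [lb_zpow_succ, lb_star_zpow h3]
      have h2 := lb_zpow_succ a (-(k : ℤ) - 1)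
      rw [sub_add_cancel, lb_star_zpow h3] at h2
      have h5 : a ^ (-((k : ℤ) + 1)) =
          a ^ (-(k : ℤ)) - a - (-(k : ℤ) - 1) • LeftBrace.star a a := by
        rw [show (-((k : ℤ) + 1)) = (-(k : ℤ) - 1) by ring, h2]; abel
      rw [h1, h5]
      have e1 : (k : ℤ) • LeftBrace.star a a + a + a ^ (k : ℤ) +
          (a ^ (-(k : ℤ)) - a - (-(k : ℤ) - 1) • LeftBrace.star a a) =
          (a ^ (k : ℤ) + a ^ (-(k : ℤ))) +
            ((k : ℤ) • LeftBrace.star a a - (-(k : ℤ) - 1) • LeftBrace.star a a) := by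
        abel
      rw [e1, ih, show (((k : ℤ) + 1) ^ 2) = (k : ℤ) ^ 2 + ((k : ℤ) - (-(k : ℤ) - 1)) by ring,
        add_zsmul, sub_zsmul]
      module
  | pred k ih =>
      have h1 : a ^ ((k : ℤ) + 1) = (k : ℤ) • LeftBrace.star a a + a + a ^ (k : ℤ) := by
        rw [lb_zpow_succ, lb_star_zpow h3]
      have h2 := lb_zpow_succ a (-(k : ℤ) - 1)
      rw [sub_add_cancel, lb_star_zpow h3] at h2
      have h5 : a ^ (-(k : ℤ) - 1) =
          a ^ (-(k : ℤ)) - a - (-(k : ℤ) - 1) • LeftBrace.star a a := by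
        rw [h2]; abel
      have h4 : a ^ (-(-(k : ℤ) - 1)) = a ^ ((k : ℤ) + 1) := by
        rw [show (-(-(k : ℤ) - 1)) = ((k : ℤ) + 1) by ring]
      rw [neg_neg] at ih
      rw [h5, h4, h1]
      have e1 : a ^ (-(k : ℤ)) - a - (-(k : ℤ) - 1) • LeftBrace.star a a +
          ((k : ℤ) • LeftBrace.star a a + a + a ^ (k : ℤ)) =
          (a ^ (-(k : ℤ)) + a ^ (k : ℤ)) +
            ((k : ℤ) • LeftBrace.star a a - (-(k : ℤ) - 1) • LeftBrace.star a a) := by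
        abel
      rw [e1, ih, show ((-(k : ℤ) - 1) ^ 2) = (-(k : ℤ)) ^ 2 + ((k : ℤ) - (-(k : ℤ) - 1)) by ring,
        add_zsmul, sub_zsmul]
      module
end

section
/- Let A be a left brace such that A³ = ⟨0⟩, and suppose A is generated as a brace by an element a. Put a₁ = a, a₂ = a₁ ⋆ a, a₃ = a₂ ⋆ a. Then every element of A has the form k₁·a₁ + k₂·a₂ + k₃·a₃ with integers k₁, k₂, k₃. Moreover, if x = k₁·a₁ + k₂·a₂ + k₃·a₃ and y = t₁·a₁ + t₂·a₂ + t₃·a₃ with integers k₁, k₂, k₃, t₁, t₂, t₃, then x ⋆ y = t₁k₁·a₂ + ((2k₂ + k₁ − k₁²)/2)·t₁·a₃ and x·y = (k₁ + t₁)·a₁ + (k₂ + t₂ + t₁k₁)·a₂ + (k₃ + t₃ + ((2k₂ + k₁ − k₁²)/2)·t₁)·a₃, where (k₁ − k₁²)/2 is an integer. -/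
open LeftBrace

namespace LeftBrace
variable {A : Type*} [LeftBrace A]

theorem one_eq_zero' : (1 : A) = 0 := by
  have h := mul_add_eq (1 : A) 0 0
  simpa using h

theorem mul_zero' (x : A) : x * 0 = x := by
  rw [← one_eq_zero', mul_one]

theorem zero_mul' (x : A) : (0 : A) * x = x := by
  rw [← one_eq_zero', one_mul]

theorem mul_eq (x y : A) : x * y = x + y + star x y := by
  rw [star]; abel

theorem star_eq_zero_iff {x y : A} : star x y = 0 ↔ x * y = x + y := by
  rw [star, sub_sub, sub_eq_zero]

theorem star_add_right (x y z : A) : star x (y + z) = star x y + star x z := by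
  simp only [star, mul_add_eq]; abel

theorem star_zero_right (x : A) : star x 0 = 0 := by
  simp [star, mul_zero']

theorem star_zsmul_right (x : A) (n : ℤ) (y : A) : star x (n • y) = n • star x y := by
  have : star x (n • y) = (AddMonoidHom.mk' (star x) (star_add_right x)) (n • y) := rfl
  rw [this, map_zsmul]; rfl

theorem star_neg_right (x y : A) : star x (-y) = - star x y := by
  have : star x (-y) = (AddMonoidHom.mk' (star x) (star_add_right x)) (-y) := rfl
  rw [this, map_neg]; rfl

theorem star_zero_left (z : A) : star 0 z = 0 := by
  simp [star, zero_mul']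

theorem mul_neg'' (x y : A) : x * (-y) = x - x * y + x := by
  have h := mul_add_eq x y (-y)
  rw [add_neg_cancel, mul_zero'] at h
  have : x * y + x * (-y) - x = x := h.symm
  have := sub_eq_iff_eq_add.mp this
  -- x*y + x*(-y) = x + x
  have h2 : x * (-y) = x + x - x * y := by
    rw [← this]; abel
  rw [h2]; abel

section WithHL

variable (hL : ∀ u v w : A, star u (star v w) = 0)
include hL

theorem star_mul_left' (x y z : A) : star (x * y) z = star x z + star y z := by
  have hfix : x * (star y z) = x + star y z := star_eq_zero_iff.mp (hL x y z)
  have e : x * (y * z - y - z) = x * (y * z) - x * y - x * z + x + x := by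
    have e1 : x * (y * z - y) = x * (y * z) + x * (-y) - x := by
      rw [sub_eq_add_neg, mul_add_eq]
    have e2 : x * ((y * z - y) + (-z)) = x * (y * z - y) + x * (-z) - x := mul_add_eq ..
    rw [show y * z - y - z = (y * z - y) + (-z) by abel, e2, e1, mul_neg'', mul_neg'']
    abel
  rw [star] at hfix
  rw [e] at hfix
  -- hfix : x * (y * z) - x*y - x*z + x + x = x + (y*z - y - z)
  have hx : x * (y * z) = x * y + x * z + (y * z) - x - y - z := by
    rw [← sub_eq_zero] at hfix ⊢
    rw [← hfix]; abel
  rw [star, star, star, mul_assoc, hx]; abel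

omit hL in
theorem star_one_left (z : A) : star (1 : A) z = 0 := by
  rw [one_eq_zero']; exact star_zero_left z

theorem star_inv_left (x z : A) : star x⁻¹ z = - star x z := by
  have h := star_mul_left' hL x⁻¹ x z
  rw [inv_mul_cancel, star_one_left] at h
  exact eq_neg_of_add_eq_zero_left h.symm

end WithHL
end LeftBrace

namespace LeftBrace
variable {A : Type*} [LeftBrace A]
section WithHL
variable (hL : ∀ u v w : A, star u (star v w) = 0)
include hL

theorem star_neg_star_left (u v z : A) : star (-(star u v)) z = - star (star u v) z := by
  have winv : (star u v)⁻¹ = -(star u v) := by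
    have h1 : (star u v)⁻¹ * (star u v) = (star u v)⁻¹ + star u v :=
      star_eq_zero_iff.mp (hL _ u v)
    rw [inv_mul_cancel, one_eq_zero'] at h1
    exact eq_neg_of_add_eq_zero_left h1.symm
  rw [← winv, star_inv_left hL]

theorem star_key (u v z : A) : star (u + v) z = star u z + star v z - star (star u v) z := by
  have huw : u * (star u v) = u + star u v := star_eq_zero_iff.mp (hL u u v)
  have hvw : v * (star u v) = v + star u v := star_eq_zero_iff.mp (hL v u v)
  have s1 : u * (v - star u v) = u + v := by
    rw [sub_eq_add_neg, mul_add_eq, mul_neg'', huw, mul_eq u v]; abel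
  have s2 : v * (-(star u v)) = v - star u v := by
    rw [mul_neg'', hvw]; abel
  rw [← s1, star_mul_left' hL, ← s2, star_mul_left' hL, star_neg_star_left hL]
  abel

variable {a b c : A} (hb : b = star a a) (hc : c = star b a)
include hb hc

theorem star_smulb (n : ℤ) : star (n • b) a = n • c := by
  induction n using Int.induction_on with
  | zero => rw [zero_zsmul, star_zero_left, zero_zsmul]
  | succ i ih =>
      have h1 : star ((i : ℤ) • b) b = 0 := by rw [hb]; exact hL _ a a
      rw [add_zsmul, one_zsmul, star_key hL, ih, h1, star_zero_left, add_zsmul, one_zsmul, hc]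
      abel
  | pred i ih =>
      have h1 : star ((-i : ℤ) • b) (-b) = 0 := by
        rw [star_neg_right, hb, hL _ a a, neg_zero]
      have h2 : star (-b) a = -c := by
        rw [hb, star_neg_star_left hL, ← hb, ← hc]
      have e : ((-i : ℤ) - 1) • b = (-i : ℤ) • b + -b := by
        rw [sub_zsmul, one_zsmul]
      rw [e, star_key hL, ih, h1, star_zero_left, h2, sub_zsmul, one_zsmul]
      abel

theorem star_c_a : star c a = 0 := by
  have hab : star a b = 0 := by rw [hb]; exact hL a a a
  have h1 : b * a = (a * b) * c := by
    have e1 : star (a * b) c = 0 := by rw [hc]; exact hL _ b a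
    rw [mul_eq b a, ← hc, mul_eq (a*b) c, e1, mul_eq a b, hab]; abel
  have h2 := congrArg (fun x => star x a) h1
  simp only [star_mul_left' hL] at h2
  -- h2 : star b a + star a a = star a a + star b a + star c a
  have : star b a + star a a = star a a + star b a + star c a := h2
  rw [← sub_eq_zero] at this
  calc star c a = -(star b a + star a a - (star a a + star b a + star c a)) := by abel
    _ = 0 := by rw [this, neg_zero]

theorem star_smulc (n : ℤ) : star (n • c) a = 0 := by
  induction n using Int.induction_on with
  | zero => rw [zero_zsmul, star_zero_left]
  | succ i ih =>
      have h1 : star ((i : ℤ) • c) c = 0 := by rw [hc]; exact hL _ b a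
      rw [add_zsmul, one_zsmul, star_key hL, ih, h1, star_zero_left, star_c_a hL hb hc]
      abel
  | pred i ih =>
      have h1 : star ((-i : ℤ) • c) (-c) = 0 := by
        rw [star_neg_right, hc, hL _ b a, neg_zero]
      have h2 : star (-c) a = -(star c a) := by
        rw [hc, star_neg_star_left hL, ← hc]
      have e : ((-i : ℤ) - 1) • c = (-i : ℤ) • c + -c := by
        rw [sub_zsmul, one_zsmul]
      rw [e, star_key hL, ih, h1, star_zero_left, h2, star_c_a hL hb hc]
      abel

end WithHL
end LeftBrace

namespace LeftBrace
variable {A : Type*} [LeftBrace A]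
section WithHL2
variable (hL : ∀ u v w : A, star u (star v w) = 0)
variable {a b c : A} (hb : b = star a a) (hc : c = star b a)
include hL hb hc

theorem star_combo_bc (p q : ℤ) : star (p • b + q • c) a = p • c := by
  have h1 : star (p • b) (q • c) = 0 := by
    rw [star_zsmul_right, hc, hL, smul_zero]
  rw [star_key hL, h1, star_zero_left, star_smulb hL hb hc, star_smulc hL hb hc]
  abel

theorem star_neg_a : star (-a) a = -b - c := by
  have h0 : star (a + -a) a = 0 := by rw [add_neg_cancel, star_zero_left]
  have h1 : star a (-a) = -b := by rw [star_neg_right, hb]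
  have h2 : star (-b) a = -c := by rw [hb, star_neg_star_left hL, ← hb, ← hc]
  rw [star_key hL, h1, h2, ← hb] at h0
  calc star (-a) a = (b + star (-a) a - -c) + (-b - c) := by abel
    _ = -b - c := by rw [h0]; abel

theorem star_smula (n : ℤ) :
    ∃ m : ℤ, 2 * m = n - n ^ 2 ∧ star (n • a) a = n • b + m • c := by
  induction n using Int.induction_on with
  | zero => exact ⟨0, by ring, by rw [zero_zsmul, star_zero_left, zero_zsmul, zero_zsmul]; abel⟩
  | succ i ih =>
      obtain ⟨m, hm, ih⟩ := ih
      refine ⟨m - i, by linear_combination hm, ?_⟩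
      rw [add_zsmul, one_zsmul, star_key hL, ih, ← hb, star_combo_bc hL hb hc,
        add_zsmul, one_zsmul, sub_zsmul]
      abel
  | pred i ih =>
      obtain ⟨m, hm, ih⟩ := ih
      refine ⟨m - 1 - i, by linear_combination hm, ?_⟩
      have e : ((-i : ℤ) - 1) • a = (-i : ℤ) • a + -a := by rw [sub_zsmul, one_zsmul]
      have h1 : star ((-i : ℤ) • a) (-a) = (i : ℤ) • b + (-m) • c := by
        rw [star_neg_right, ih]; rw [neg_add, ← neg_zsmul, ← neg_zsmul, neg_neg]
      rw [e, star_key hL, ih, star_neg_a hL hb hc, h1, star_combo_bc hL hb hc,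
        sub_zsmul, sub_zsmul, one_zsmul]
      module

theorem star_combo_left (k₁ k₂ k₃ : ℤ) :
    ∃ m : ℤ, 2 * m = k₁ - k₁ ^ 2 ∧
      star (k₁ • a + k₂ • b + k₃ • c) a = k₁ • b + (k₂ + m) • c := by
  obtain ⟨m, hm, h⟩ := star_smula hL hb hc k₁
  refine ⟨m, hm, ?_⟩
  have h1 : star (k₁ • a) (k₂ • b + k₃ • c) = 0 := by
    rw [star_add_right, star_zsmul_right, star_zsmul_right, hb, hc, hL, hL, smul_zero,
      smul_zero, add_zero]
  rw [add_assoc, star_key hL, h1, star_zero_left, h, star_combo_bc hL hb hc, add_zsmul]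
  abel

theorem star_combo_full (k₁ k₂ k₃ t₁ t₂ t₃ : ℤ) :
    ∃ m : ℤ, 2 * m = k₁ - k₁ ^ 2 ∧
      star (k₁ • a + k₂ • b + k₃ • c) (t₁ • a + t₂ • b + t₃ • c) =
        (t₁ * k₁) • b + (t₁ * (k₂ + m)) • c := by
  obtain ⟨m, hm, h⟩ := star_combo_left hL hb hc k₁ k₂ k₃
  refine ⟨m, hm, ?_⟩
  set x := k₁ • a + k₂ • b + k₃ • c
  have hxb : star x b = 0 := by rw [hb]; exact hL x a a
  have hxc : star x c = 0 := by rw [hc]; exact hL x b a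
  rw [star_add_right, star_add_right, star_zsmul_right, star_zsmul_right, star_zsmul_right,
    hxb, hxc, smul_zero, smul_zero, h, smul_add, smul_smul, smul_smul]
  abel

end WithHL2
end LeftBrace



/-- **Theorem A, first part.** Let `A` be a left brace with
`A³ = ⟨0⟩` (here `A³ = A ⋆ (A ⋆ A) = leftSeriesN A 2`), generated as a brace
by the element `a` (i.e. the only subbrace containing `a` is `A` itself).
Put `a₁ = a`, `a₂ = a₁ ⋆ a`, `a₃ = a₂ ⋆ a`.  Then every element of `A` has
the form `k₁·a₁ + k₂·a₂ + k₃·a₃` with integers `k₁, k₂, k₃`, and for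
`x = k₁·a₁ + k₂·a₂ + k₃·a₃`, `y = t₁·a₁ + t₂·a₂ + t₃·a₃` one has
`x ⋆ y = t₁k₁·a₂ + ((2k₂ + k₁ − k₁²)/2)·t₁·a₃` and
`x·y = (k₁+t₁)·a₁ + (k₂+t₂+t₁k₁)·a₂ + (k₃+t₃+((2k₂+k₁−k₁²)/2)·t₁)·a₃`
(note that `2k₂ + k₁ − k₁²` is even, so the integer division by `2` is exact). -/
theorem one_generator_structure {A : Type*} [LeftBrace A] (a : A)
    (h3 : leftSeriesN A 2 = ⊥)
    (hgen : ∀ S : Set A, IsSubbrace S → a ∈ S → S = Set.univ) :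
    (∀ x : A, ∃ k₁ k₂ k₃ : ℤ,
        x = k₁ • a + k₂ • star a a + k₃ • star (star a a) a) ∧
    (∀ k₁ k₂ k₃ t₁ t₂ t₃ : ℤ,
        star (k₁ • a + k₂ • star a a + k₃ • star (star a a) a)
            (t₁ • a + t₂ • star a a + t₃ • star (star a a) a) =
          (t₁ * k₁) • star a a +
            (((2 * k₂ + k₁ - k₁ ^ 2) / 2) * t₁) • star (star a a) a ∧
        (k₁ • a + k₂ • star a a + k₃ • star (star a a) a) *
            (t₁ • a + t₂ • star a a + t₃ • star (star a a) a) =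
          (k₁ + t₁) • a + (k₂ + t₂ + t₁ * k₁) • star a a +
            (k₃ + t₃ + ((2 * k₂ + k₁ - k₁ ^ 2) / 2) * t₁) • star (star a a) a) := by
  have hL : ∀ u v w : A, star u (star v w) = 0 := by
    intro u v w
    have h1 : star v w ∈ leftSeriesN A 1 := by
      apply AddSubgroup.subset_closure
      exact Set.mem_image2_of_mem (Set.mem_univ v) (Set.mem_univ w)
    have h2 : star u (star v w) ∈ leftSeriesN A 2 := by
      apply AddSubgroup.subset_closure
      exact Set.mem_image2_of_mem (Set.mem_univ u) h1
    rw [h3] at h2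
    exact AddSubgroup.mem_bot.mp h2
  have hb : star a a = star a a := rfl
  have hc : star (star a a) a = star (star a a) a := rfl
  -- second part
  have part2 : ∀ k₁ k₂ k₃ t₁ t₂ t₃ : ℤ,
      star (k₁ • a + k₂ • star a a + k₃ • star (star a a) a)
          (t₁ • a + t₂ • star a a + t₃ • star (star a a) a) =
        (t₁ * k₁) • star a a +
          (((2 * k₂ + k₁ - k₁ ^ 2) / 2) * t₁) • star (star a a) a ∧
      (k₁ • a + k₂ • star a a + k₃ • star (star a a) a) *
          (t₁ • a + t₂ • star a a + t₃ • star (star a a) a) =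
        (k₁ + t₁) • a + (k₂ + t₂ + t₁ * k₁) • star a a +
          (k₃ + t₃ + ((2 * k₂ + k₁ - k₁ ^ 2) / 2) * t₁) • star (star a a) a := by
    intro k₁ k₂ k₃ t₁ t₂ t₃
    obtain ⟨m, hm, hstar⟩ := star_combo_full hL hb hc k₁ k₂ k₃ t₁ t₂ t₃
    have h2 : 2 * k₂ + k₁ - k₁ ^ 2 = 2 * (k₂ + m) := by linear_combination -hm
    have hdiv : (2 * k₂ + k₁ - k₁ ^ 2) / 2 = k₂ + m := by
      rw [h2, Int.mul_ediv_cancel_left _ two_ne_zero]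
    constructor
    · rw [hstar, hdiv, show (k₂ + m) * t₁ = t₁ * (k₂ + m) from mul_comm _ _]
    · rw [mul_eq, hstar, hdiv]
      module
  refine ⟨?_, part2⟩
  -- first part
  set S : Set A := {x : A | ∃ k₁ k₂ k₃ : ℤ,
      x = k₁ • a + k₂ • star a a + k₃ • star (star a a) a} with hS
  have mem0 : (0 : A) ∈ S := ⟨0, 0, 0, by simp⟩
  have hsub : IsSubbrace S := by
    refine ⟨mem0, ?_, ?_, ?_, ?_, ?_⟩
    · rintro x ⟨k₁, k₂, k₃, rfl⟩ y ⟨t₁, t₂, t₃, rfl⟩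
      exact ⟨k₁ + t₁, k₂ + t₂, k₃ + t₃, by module⟩
    · rintro x ⟨k₁, k₂, k₃, rfl⟩
      exact ⟨-k₁, -k₂, -k₃, by module⟩
    · rw [one_eq_zero']; exact mem0
    · rintro x ⟨k₁, k₂, k₃, rfl⟩ y ⟨t₁, t₂, t₃, rfl⟩
      exact ⟨k₁ + t₁, k₂ + t₂ + t₁ * k₁,
        k₃ + t₃ + ((2 * k₂ + k₁ - k₁ ^ 2) / 2) * t₁,
        (part2 k₁ k₂ k₃ t₁ t₂ t₃).2⟩
    · rintro x ⟨k₁, k₂, k₃, rfl⟩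
      set M := (2 * k₂ + k₁ - k₁ ^ 2) / 2 with hM
      have h := (part2 k₁ k₂ k₃ (-k₁) (k₁ * k₁ - k₂) (M * k₁ - k₃)).2
      have hone : (k₁ • a + k₂ • star a a + k₃ • star (star a a) a) *
          ((-k₁) • a + (k₁ * k₁ - k₂) • star a a + (M * k₁ - k₃) • star (star a a) a)
          = 1 := by
        rw [h, one_eq_zero']
        have e1 : k₁ + -k₁ = 0 := by ring
        have e2 : k₂ + (k₁ * k₁ - k₂) + -k₁ * k₁ = 0 := by ring
        have e3 : k₃ + (M * k₁ - k₃) + M * -k₁ = 0 := by ring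
        rw [e1, e2, e3, zero_zsmul, zero_zsmul, zero_zsmul, add_zero, add_zero]
      have hinv := inv_eq_of_mul_eq_one_right hone
      exact ⟨-k₁, k₁ * k₁ - k₂, M * k₁ - k₃, hinv⟩
  have haS : a ∈ S := ⟨1, 0, 0, by simp⟩
  have huniv := hgen S hsub haS
  intro x
  have : x ∈ S := huniv ▸ Set.mem_univ x
  exact this
end
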